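/- Every finitely generated residually finite group is Hopfian: every surjective group endomorphism of such a group is an isomorphism. -/
import Mathlib

lemma homFinite {G Q : Type} [Group G] [Group Q] (hfg : Group.FG G) [Finite Q] :
    Finite (G →* Q) := by
  obtain ⟨S, hS⟩ := hfg
  have : Function.Injective (fun f : G →* Q => (fun s : S => f s)) := by
    intro f g h
    exact MonoidHom.eq_of_eqOn_dense hS (fun x hx => congrFun h ⟨x, hx⟩)
  exact Finite.of_injective _ this

/-- Malcev: every finitely generated residually finite group is Hopfian. -/
theorem stmt1 {G : Type} [Group G] (hfg : Group.FG G)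
    (hrf : ∀ g : G, g ≠ 1 →
      ∃ (Q : Type) (_ : Group Q) (_ : Finite Q) (φ : G →* Q), φ g ≠ 1)
    (φ : G →* G) (hsurj : Function.Surjective φ) : Function.Bijective φ := by
  refine ⟨?_, hsurj⟩
  rw [← MonoidHom.ker_eq_bot_iff, eq_bot_iff]
  intro g hg
  by_contra hne
  obtain ⟨Q, _, _, ψ, hψ⟩ := hrf g hne
  have : Finite (G →* Q) := homFinite hfg
  -- composition with φ is injective, hence surjective on the finite set
  have hinj : Function.Injective (fun α : G →* Q => α.comp φ) := by
    intro a b h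
    ext x
    obtain ⟨y, rfl⟩ := hsurj x
    exact congrArg (fun f : G →* Q => f y) h
  have hsur : Function.Surjective (fun α : G →* Q => α.comp φ) :=
    Finite.surjective_of_injective hinj
  obtain ⟨α, hα⟩ := hsur ψ
  have : ψ g = 1 := by
    have := congrArg (fun f : G →* Q => f g) hα
    simp only [MonoidHom.comp_apply] at this
    rw [← this, hg, map_one]
  exact hψ this
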